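/- Let Z: K → ℂ[m] be of the form Z(u)(m) = Σ_{d=0}^3 ρ_d I_d(u) m^d, where I_d: K → ℝ are additive functionals and the ρ_d ∈ ℂ* satisfy that r_{ij} − r_{ji} ≠ 0 for all i ≠ j, where r_{ij} = Re(ρ_i)Im(ρ_j). Suppose E, F ∈ K satisfy Im Z(E) Re Z(F) − Re Z(E) Im Z(F) = 0 identically as polynomials in m, and I₃(E) ≠ 0. Then I₃(E) I_d(F) = I₃(F) I_d(E) for d = 0, 1, 2. -/
import Mathlib

open Finset Polynomial in
lemma coeffs7 (c : Fin 7 → ℝ) (h : ∀ x : ℝ, ∑ i : Fin 7, c i * x ^ (i:ℕ) = 0) :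
    ∀ i : Fin 7, c i = 0 := by
  have hp : (∑ i : Fin 7, C (c i) * X ^ (i:ℕ) : ℝ[X]) = 0 := by
    apply Polynomial.funext; intro x
    simpa [Polynomial.eval_finset_sum] using h x
  intro i
  have := congrArg (fun q : ℝ[X] => q.coeff (i:ℕ)) hp
  simp only [Polynomial.finset_sum_coeff, Polynomial.coeff_C_mul, Polynomial.coeff_X_pow,
    Polynomial.coeff_zero] at this
  rw [Finset.sum_eq_single i] at this
  · simpa using this
  · intro b _ hb
    have : (b:ℕ) ≠ (i:ℕ) := fun h => hb (Fin.ext h)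
    simp [Ne.symm this]
  · simp

open Finset in
/-- Let `Z : K → ℂ[m]` be given by `Z(u)(m) = Σ_{d=0}^{3} ρ_d I_d(u) m^d`,
where the `I_d : K → ℝ` are additive and the nonzero complex numbers `ρ_d` are pairwise
non-collinear over `ℝ` (i.e. `r_{ij} - r_{ji} ≠ 0` for `i ≠ j`, where `r_{ij} = Re ρ_i · Im ρ_j`).
If `E, F ∈ K` satisfy `Im Z(E) · Re Z(F) - Re Z(E) · Im Z(F) = 0` identically in `m`, and
`I₃(E) ≠ 0`, then `I₃(E) I_d(F) = I₃(F) I_d(E)` for `d = 0, 1, 2`. -/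
theorem stmt10 {K : Type*} [AddCommGroup K] (ρ : Fin 4 → ℂ) (I : Fin 4 → K →+ ℝ)
    (hρ : ∀ d, ρ d ≠ 0)
    (hr : ∀ i j : Fin 4, i ≠ j →
      (ρ i).re * (ρ j).im - (ρ j).re * (ρ i).im ≠ 0)
    (E F : K)
    (hEF : ∀ m : ℝ,
      (∑ d : Fin 4, ρ d * (I d E : ℂ) * (m : ℂ) ^ (d : ℕ)).im *
        (∑ d : Fin 4, ρ d * (I d F : ℂ) * (m : ℂ) ^ (d : ℕ)).re -
      (∑ d : Fin 4, ρ d * (I d E : ℂ) * (m : ℂ) ^ (d : ℕ)).re *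
        (∑ d : Fin 4, ρ d * (I d F : ℂ) * (m : ℂ) ^ (d : ℕ)).im = 0)
    (h3 : I 3 E ≠ 0) :
    ∀ d : Fin 4, d ≠ 3 → I 3 E * I d F = I 3 F * I d E := by
  set a : Fin 4 → ℝ := fun d => I d E with ha
  set b : Fin 4 → ℝ := fun d => I d F with hb
  set s : Fin 4 → Fin 4 → ℝ := fun i j => (ρ i).im * (ρ j).re - (ρ i).re * (ρ j).im with hs
  have hmain : ∀ x : ℝ, ∑ i : Fin 7, (![0,
      s 0 1 * (a 0 * b 1 - a 1 * b 0),
      s 0 2 * (a 0 * b 2 - a 2 * b 0),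
      s 0 3 * (a 0 * b 3 - a 3 * b 0) + s 1 2 * (a 1 * b 2 - a 2 * b 1),
      s 1 3 * (a 1 * b 3 - a 3 * b 1),
      s 2 3 * (a 2 * b 3 - a 3 * b 2),
      0] : Fin 7 → ℝ) i * x ^ (i:ℕ) = 0 := by
    intro x
    have h := hEF x
    simp only [Fin.sum_univ_four, Fin.isValue, Fin.val_zero, pow_zero, mul_one, Fin.val_one,
      pow_one, Fin.val_two, show ((3 : Fin 4) : ℕ) = 3 from rfl,
      ← Complex.ofReal_pow, Complex.add_re, Complex.add_im,
      Complex.mul_re, Complex.mul_im, Complex.ofReal_re, Complex.ofReal_im,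
      mul_zero, zero_mul, sub_zero, add_zero, zero_add] at h
    simp only [Fin.sum_univ_succ, Fin.sum_univ_zero, Matrix.cons_val_zero, Matrix.cons_val_succ,
      Fin.val_zero, Fin.val_succ, Fin.isValue, hs, ha, hb]
    norm_num
    linear_combination h
  have key := coeffs7 _ hmain
  have sne : ∀ i j : Fin 4, i ≠ j → s i j ≠ 0 := by
    intro i j hij hz
    have hz' : (ρ i).im * (ρ j).re - (ρ i).re * (ρ j).im = 0 := hz
    exact hr j i (Ne.symm hij) (by linarith)
  have k5 : s 2 3 * (a 2 * b 3 - a 3 * b 2) = 0 := key 5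
  have k4 : s 1 3 * (a 1 * b 3 - a 3 * b 1) = 0 := key 4
  have k3 : s 0 3 * (a 0 * b 3 - a 3 * b 0) + s 1 2 * (a 1 * b 2 - a 2 * b 1) = 0 := key 3
  have e2 : a 2 * b 3 - a 3 * b 2 = 0 := by
    rcases mul_eq_zero.mp k5 with h | h
    · exact absurd h (sne 2 3 (by decide))
    · exact h
  have e1 : a 1 * b 3 - a 3 * b 1 = 0 := by
    rcases mul_eq_zero.mp k4 with h | h
    · exact absurd h (sne 1 3 (by decide))
    · exact h
  have e12 : a 1 * b 2 - a 2 * b 1 = 0 := by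
    have h' : a 3 * (a 1 * b 2 - a 2 * b 1) = 0 := by
      linear_combination a 2 * e1 - a 1 * e2
    rcases mul_eq_zero.mp h' with h | h
    · exact absurd h h3
    · exact h
  have e0 : a 0 * b 3 - a 3 * b 0 = 0 := by
    have h' : s 0 3 * (a 0 * b 3 - a 3 * b 0) = 0 := by
      linear_combination k3 - s 1 2 * e12
    rcases mul_eq_zero.mp h' with h | h
    · exact absurd h (sne 0 3 (by decide))
    · exact h
  intro d hd
  fin_cases d
  · show a 3 * b 0 = b 3 * a 0; linarith [e0]
  · show a 3 * b 1 = b 3 * a 1; linarith [e1]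
  · show a 3 * b 2 = b 3 * a 2; linarith [e2]
  · exact absurd rfl hd
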